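/- Let n be a natural number and let i be a natural number with i ≤ n, and set j := n - i. Then ((-n)_i / i!) · (-i)_{n-i} = (-1)^n · (2^{2j} / j!) · (-n/2)_j · ((1-n)/2)_j, as an identity of real numbers. -/

import Mathlib

/-- The Pochhammer symbol (rising factorial) `(x)_n = x(x+1)⋯(x+n-1)` for real `x`. -/
noncomputable def poch (x : ℝ) (n : ℕ) : ℝ := (ascPochhammer ℝ n).eval x

lemma poch_dup (x : ℝ) (j : ℕ) :
    poch x (2 * j) = 4 ^ j * (poch (x / 2) j * poch ((x + 1) / 2) j) := by
  induction j with
  | zero => simp [poch]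
  | succ j ih =>
    have h2 : 2 * (j + 1) = (2 * j + 1) + 1 := by ring
    rw [h2]
    unfold poch at *
    rw [ascPochhammer_succ_eval, ascPochhammer_succ_eval, ascPochhammer_succ_eval,
      ascPochhammer_succ_eval, ih]
    push_cast
    ring

lemma poch_neg_nat (n k : ℕ) :
    poch (-(n : ℝ)) k = (-1) ^ k * (n.descFactorial k : ℝ) := by
  unfold poch
  rw [ascPochhammer_eval_neg_eq_descPochhammer, descPochhammer_eval_eq_descFactorial]

lemma key (n i j : ℕ) (h : i + j = n) :
    (j.factorial : ℝ) * ((n.descFactorial i : ℝ) * (i.descFactorial j : ℝ)) =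
      (i.factorial : ℝ) * (n.descFactorial (2 * j) : ℝ) := by
  rcases le_or_gt j i with hji | hij
  · have h1 : n.choose i = n.choose j := by
      rw [← Nat.choose_symm (show i ≤ n by omega)]
      congr 1; omega
    have h2 : n.choose (2 * j) * ((2 * j).choose j) = n.choose j * i.choose j := by
      have := Nat.choose_mul (n := n) (show j ≤ 2 * j by omega)
      rwa [show n - j = i by omega, show 2 * j - j = j by omega] at this
    have h3 : (2 * j).choose j * j.factorial * j.factorial = (2 * j).factorial := by
      have := Nat.choose_mul_factorial_mul_factorial (show j ≤ 2 * j by omega)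
      rwa [show 2 * j - j = j by omega] at this
    rw [Nat.descFactorial_eq_factorial_mul_choose, Nat.descFactorial_eq_factorial_mul_choose,
      Nat.descFactorial_eq_factorial_mul_choose, h1, ← h3]
    have h2' : ((n.choose (2 * j) : ℝ)) * ((2 * j).choose j : ℝ)
        = (n.choose j : ℝ) * (i.choose j : ℝ) := by exact_mod_cast h2
    push_cast
    linear_combination (-(i.factorial : ℝ) * j.factorial * j.factorial) * h2'
  · have d1 : i.descFactorial j = 0 := Nat.descFactorial_eq_zero_iff_lt.mpr hij
    have d2 : n.descFactorial (2 * j) = 0 := Nat.descFactorial_eq_zero_iff_lt.mpr (by omega)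
    simp [d1, d2]

theorem stmt_4 (n i : ℕ) (hin : i ≤ n) (j : ℕ) (hj : j = n - i) :
    (poch (-(n : ℝ)) i / (Nat.factorial i : ℝ)) * poch (-(i : ℝ)) (n - i) =
      (-1 : ℝ) ^ n * ((2 : ℝ) ^ (2 * j) / (Nat.factorial j : ℝ)) *
        poch (-(n : ℝ) / 2) j * poch ((1 - (n : ℝ)) / 2) j := by
  have hn : i + j = n := by omega
  have hni : n - i = j := by omega
  have hd := poch_dup (-(n : ℝ)) j
  rw [poch_neg_nat n (2 * j)] at hd
  have e1 : (1 - (n : ℝ)) / 2 = (-(n : ℝ) + 1) / 2 := by ring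
  rw [hni, e1, poch_neg_nat, poch_neg_nat]
  have hk := key n i j hn
  have hif : (i.factorial : ℝ) ≠ 0 := Nat.cast_ne_zero.mpr i.factorial_ne_zero
  have hjf : (j.factorial : ℝ) ≠ 0 := Nat.cast_ne_zero.mpr j.factorial_ne_zero
  have hpow : ((-1 : ℝ)) ^ i * (-1) ^ j = (-1) ^ n := by rw [← pow_add, hn]
  have h4 : (2 : ℝ) ^ (2 * j) = 4 ^ j := by rw [pow_mul]; norm_num
  field_simp
  have hne : (4 : ℝ) ^ j ≠ 0 := by positivity
  rw [h4]
  have hd' : poch (-(n : ℝ) / 2) j * poch ((-(n : ℝ) + 1) / 2) j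
      = (-1) ^ (2 * j) * (n.descFactorial (2 * j) : ℝ) / 4 ^ j := by
    field_simp at hd ⊢
    linarith [hd]
  rw [← neg_div, mul_assoc ((i.factorial : ℝ) * (-1 : ℝ) ^ n * 4 ^ j)]
  rw [hd']
  have hev : ((-1 : ℝ)) ^ (2 * j) = 1 := by
    rw [pow_mul]; norm_num
  rw [hev, one_mul]
  field_simp
  linear_combination ((-1 : ℝ) ^ n) * hk + (↑(n.descFactorial i) * ↑(i.descFactorial j) * ↑(Nat.factorial j)) * hpow
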